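/- Escobar–West Gamma-mixture identity: let c > 0, let K ≥ 1 be an integer (so c + K − 1 > 0), let n ≥ 1 be an integer, let η ∈ (0,1) and d > 0, and set β = d − log η > 0. Then for every α > 0, α^{c+K−2}(α+n)e^{−βα} = [Γ(c+K)/β^{c+K}] · f_{c+K,β}(α) + n·[Γ(c+K−1)/β^{c+K−1}] · f_{c+K−1,β}(α), where f_{k,θ}(α) = θ^k α^{k−1} e^{−θα}/Γ(k) is the Gamma(k,θ) density. Consequently, the normalized weight g = [Γ(c+K)/β^{c+K}] / ([Γ(c+K)/β^{c+K}] + n·Γ(c+K−1)/β^{c+K−1}) of the first component satisfies g/(1−g) = (c+K−1)/(nβ) = (c+K−1)/(n(d − log η)); i.e., the full conditional of the DP concentration parameter α given the auxiliary variable η and the number of clusters K is the stated two-component mixture of Gamma distributions. -/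

import Mathlib

/-- The `Gamma(k, θ)` density (shape `k > 0`, rate `θ > 0`) at `α`. -/
noncomputable def gammaDensity (k θ α : ℝ) : ℝ :=
  θ ^ k * α ^ (k - 1) * Real.exp (-θ * α) / Real.Gamma k

/-- Escobar–West Gamma-mixture identity for the full conditional of the DP
concentration parameter `α` given the auxiliary variable `η` and the number of
clusters `K`: the unnormalized density `α^{c+K-2}(α+n)e^{−βα}`, with
`β = d − log η > 0`, is the stated two-component mixture of Gamma densities, and
the normalized weight `g` of the first component satisfies
`g/(1−g) = (c+K−1)/(n(d − log η))`. -/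
theorem escobar_west_mixture (c : ℝ) (hc : 0 < c) (K : ℕ) (hK : 1 ≤ K)
    (n : ℕ) (hn : 1 ≤ n) (η : ℝ) (hη : η ∈ Set.Ioo (0 : ℝ) 1) (d : ℝ) (hd : 0 < d)
    (β : ℝ) (hβ : β = d - Real.log η) :
    0 < β ∧
    (∀ α : ℝ, 0 < α →
      α ^ (c + K - 2) * (α + n) * Real.exp (-β * α) =
        Real.Gamma (c + K) / β ^ (c + K) * gammaDensity (c + K) β α +
          n * (Real.Gamma (c + K - 1) / β ^ (c + K - 1)) *
            gammaDensity (c + K - 1) β α) ∧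
    (Real.Gamma (c + K) / β ^ (c + K) /
          (Real.Gamma (c + K) / β ^ (c + K) +
            n * (Real.Gamma (c + K - 1) / β ^ (c + K - 1)))) /
        (1 - Real.Gamma (c + K) / β ^ (c + K) /
          (Real.Gamma (c + K) / β ^ (c + K) +
            n * (Real.Gamma (c + K - 1) / β ^ (c + K - 1)))) =
      (c + K - 1) / (n * (d - Real.log η)) := by
  obtain ⟨hη0, hη1⟩ := hη
  have hlog : Real.log η < 0 := Real.log_neg hη0 hη1
  have hβpos : 0 < β := by rw [hβ]; linarith
  have hK1 : (1 : ℝ) ≤ K := by exact_mod_cast hK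
  have hck1 : 0 < c + K - 1 := by linarith
  have hck : 0 < c + K := by linarith
  have hn0 : (0 : ℝ) < n := by exact_mod_cast hn
  have hG1 : 0 < Real.Gamma (c + K) := Real.Gamma_pos_of_pos hck
  have hG2 : 0 < Real.Gamma (c + K - 1) := Real.Gamma_pos_of_pos hck1
  have hb1 : (0 : ℝ) < β ^ (c + K) := Real.rpow_pos_of_pos hβpos _
  have hb2 : (0 : ℝ) < β ^ (c + K - 1) := Real.rpow_pos_of_pos hβpos _
  have hGrec : Real.Gamma (c + K) = (c + K - 1) * Real.Gamma (c + K - 1) := by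
    have := Real.Gamma_add_one (ne_of_gt hck1)
    rw [show c + K - 1 + 1 = c + K by ring] at this
    rw [this]
  refine ⟨hβpos, ?_, ?_⟩
  · intro α hα
    have key : ∀ k : ℝ, 0 < k →
        Real.Gamma k / β ^ k * gammaDensity k β α =
          α ^ (k - 1) * Real.exp (-β * α) := by
      intro k hk
      have hGk : Real.Gamma k ≠ 0 := ne_of_gt (Real.Gamma_pos_of_pos hk)
      have hbk : (β : ℝ) ^ k ≠ 0 := ne_of_gt (Real.rpow_pos_of_pos hβpos k)
      unfold gammaDensity
      field_simp
    rw [key _ hck, mul_assoc ((n:ℝ)), key _ hck1]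
    have h1 : α ^ (c + K - 1) = α ^ (c + K - 2) * α := by
      rw [show c + K - 1 = (c + K - 2) + 1 by ring, Real.rpow_add hα, Real.rpow_one]
    rw [h1]; ring
  · set A := Real.Gamma (c + K) / β ^ (c + K) with hA
    set B := (n : ℝ) * (Real.Gamma (c + K - 1) / β ^ (c + K - 1)) with hB
    clear_value A B
    have hApos : 0 < A := by rw [hA]; exact div_pos hG1 hb1
    have hBpos : 0 < B := by rw [hB]; exact mul_pos hn0 (div_pos hG2 hb2)
    have hAB : A + B ≠ 0 := ne_of_gt (by linarith)
    have h1g : 1 - A / (A + B) = B / (A + B) := by field_simp; ring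
    rw [h1g]
    have hq : A / (A + B) / (B / (A + B)) = A / B := by
      field_simp
    have hbsplit : β ^ (c + K) = β ^ (c + K - 1) * β := by
      have h := Real.rpow_add hβpos (c + (K:ℝ) - 1) 1
      rw [Real.rpow_one, show c + (K:ℝ) - 1 + 1 = c + K by ring] at h
      exact h
    rw [hq, ← hβ]

    have hX : (0:ℝ) < Real.Gamma (c + ↑K - 1) / β ^ (c + ↑K - 1) := div_pos hG2 hb2
    have hAeq : A = (c + ↑K - 1) / β * (Real.Gamma (c + ↑K - 1) / β ^ (c + ↑K - 1)) := by
      rw [hA, hGrec, hbsplit, mul_comm (β ^ (c + (K:ℝ) - 1)) β, mul_div_mul_comm]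
    rw [hAeq, hB, mul_div_mul_right _ _ (ne_of_gt hX), div_div, mul_comm β]
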